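/- Let H and K be real Hilbert spaces and G : H → K a bounded linear operator with adjoint G*. Let V := {(z, G z) : z ∈ H} be the graph of G and V^⊥ its orthogonal complement in H × K. Then for every (z, w) ∈ H × K, if v ∈ K satisfies v + G(G* v) = G z − w, then the orthogonal projection of (z, w) onto V^⊥ equals (G* v, −v). -/

import Mathlib

open scoped RealInnerProductSpace

/-- The graph `V = {(z, G z) : z ∈ H}` of a bounded linear map `G : H → K`, as a submodule of the
Hilbert space `H × K` (with the product inner product, i.e. `WithLp 2 (H × K)`). -/
noncomputable def graphSubmodule {H K : Type*} [NormedAddCommGroup H] [InnerProductSpace ℝ H]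
    [NormedAddCommGroup K] [InnerProductSpace ℝ K] (G : H →L[ℝ] K) :
    Submodule ℝ (WithLp 2 (H × K)) :=
  (LinearMap.graph (G : H →ₗ[ℝ] K)).comap (WithLp.linearEquiv 2 ℝ (H × K)).toLinearMap

instance graphSubmodule.instCompleteSpace {H K : Type*} [NormedAddCommGroup H]
    [InnerProductSpace ℝ H] [CompleteSpace H] [NormedAddCommGroup K] [InnerProductSpace ℝ K]
    [CompleteSpace K] (G : H →L[ℝ] K) : CompleteSpace (graphSubmodule G) := by
  have hclosed : IsClosed (graphSubmodule G : Set (WithLp 2 (H × K))) := by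
    have hset : (graphSubmodule G : Set (WithLp 2 (H × K))) =
        {p : WithLp 2 (H × K) | G ((WithLp.equiv 2 (H × K)) p).1 =
          ((WithLp.equiv 2 (H × K)) p).2} := by
      ext p
      simp only [graphSubmodule, Submodule.mem_comap, SetLike.mem_coe, LinearMap.mem_graph_iff,
        Set.mem_setOf_eq, ContinuousLinearMap.coe_coe]
      exact eq_comm
    rw [hset]
    have hcont : Continuous fun p : WithLp 2 (H × K) => (WithLp.equiv 2 (H × K)) p :=
      (WithLp.prodContinuousLinearEquiv 2 ℝ H K).continuous
    exact isClosed_eq (G.continuous.comp (continuous_fst.comp hcont)) (continuous_snd.comp hcont)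
  exact hclosed.completeSpace_coe


/-- Let `G : H → K` be bounded linear with adjoint `G*`, let
`V = {(z, G z) : z ∈ H}` be its graph in `H × K` and `Vᗮ` its orthogonal complement.
If `v + G(G* v) = G z − w`, then the orthogonal projection of `(z, w)` onto `Vᗮ` equals
`(G* v, −v)`. -/
theorem orthogonalProjection_graph_orthogonal_eq {H K : Type*} [NormedAddCommGroup H]
    [InnerProductSpace ℝ H] [CompleteSpace H] [NormedAddCommGroup K] [InnerProductSpace ℝ K]
    [CompleteSpace K] (G : H →L[ℝ] K) (z : H) (w : K) (v : K)
    (hv : v + G (ContinuousLinearMap.adjoint G v) = G z - w) :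
    (Submodule.orthogonalProjectionOnto (graphSubmodule G)ᗮ ((WithLp.equiv 2 (H × K)).symm (z, w)) :
      WithLp 2 (H × K)) = (WithLp.equiv 2 (H × K)).symm (ContinuousLinearMap.adjoint G v, -v) := by
  rw [← Submodule.starProjection_apply]
  apply Submodule.eq_starProjection_of_mem_orthogonal
  · -- (G* v, -v) ∈ Vᗮ
    intro u hu
    simp only [graphSubmodule, Submodule.mem_comap, LinearMap.mem_graph_iff,
      LinearEquiv.coe_toLinearMap, ContinuousLinearMap.coe_coe] at hu
    rw [WithLp.prod_inner_apply]
    have h1 : ((WithLp.equiv 2 (H × K)).symm (ContinuousLinearMap.adjoint G v, -v)).ofLp.1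
        = ContinuousLinearMap.adjoint G v := rfl
    have h2 : ((WithLp.equiv 2 (H × K)).symm (ContinuousLinearMap.adjoint G v, -v)).ofLp.2
        = -v := rfl
    have hu2 : u.ofLp.2 = G u.ofLp.1 := hu
    rw [h1, h2, hu2, ContinuousLinearMap.adjoint_inner_right, inner_neg_right]
    ring
  · -- difference ∈ Vᗮᗮ = V
    rw [Submodule.orthogonal_orthogonal]
    simp only [graphSubmodule, Submodule.mem_comap, LinearMap.mem_graph_iff,
      LinearEquiv.coe_toLinearMap, ContinuousLinearMap.coe_coe]
    show w - -v = G (z - ContinuousLinearMap.adjoint G v)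
    rw [G.map_sub, sub_neg_eq_add]
    rw [eq_sub_iff_add_eq] at hv
    rw [← hv]
    abel
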